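/- Let V be a D(ℝ)-submodule of D(ℝ)^(n) that has an s-base S. Then S is precisely the set of critical elements of V up to projective equivalence: every element of S is critical, and every critical element of V is projectively equivalent to an element of S. -/

import Mathlib

noncomputable section

/-- The extended tropical semifield `D(ℝ)`: `bot` is `-∞`; `nb g r` is the element of
underlying value `r : ℝ`, ghost if `g = true`, tangible if `g = false`. -/
inductive DR : Type where
  | bot : DR
  | nb : Bool → ℝ → DR

namespace DR

/-- Supertropical addition on `D(ℝ)`. -/
def add : DR → DR → DR
  | bot, y => y
  | x, bot => x
  | nb b r, nb c s => if r < s then nb c s else if s < r then nb b r else nb true r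

/-- Supertropical multiplication on `D(ℝ)`. -/
def mul : DR → DR → DR
  | bot, _ => bot
  | _, bot => bot
  | nb b r, nb c s => nb (b || c) (r + s)

theorem bot_add (x : DR) : add bot x = x := by cases x <;> rfl

theorem add_bot (x : DR) : add x bot = x := by cases x <;> rfl

theorem bot_mul (x : DR) : mul bot x = bot := by cases x <;> rfl

theorem mul_bot (x : DR) : mul x bot = bot := by cases x <;> rfl

theorem add_comm' (x y : DR) : add x y = add y x := by
  cases x <;> cases y <;> (try rfl)
  simp only [add]
  split_ifs <;>
    first
      | rfl
      | (exfalso; linarith)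
      | (congr 1 <;> first | rfl | linarith)

theorem add_assoc' (x y z : DR) : add (add x y) z = add x (add y z) := by
  cases x with
  | bot => rw [bot_add, bot_add]
  | nb b r =>
    cases y with
    | bot => rw [add_bot, bot_add]
    | nb c s =>
      cases z with
      | bot => rw [add_bot, add_bot]
      | nb d t =>
        simp only [add]
        split_ifs <;>
          simp only [add] <;>
          (try split_ifs) <;>
          first
            | rfl
            | (exfalso; linarith)
            | (congr 1 <;> first | rfl | linarith)

theorem mul_comm' (x y : DR) : mul x y = mul y x := by
  cases x <;> cases y <;> (try rfl)
  simp [mul, Bool.or_comm, add_comm]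

theorem mul_assoc' (x y z : DR) : mul (mul x y) z = mul x (mul y z) := by
  cases x <;> cases y <;> cases z <;> (try rfl) <;>
    simp [mul, Bool.or_assoc, add_assoc]

theorem one_mul' (x : DR) : mul (nb false 0) x = x := by
  cases x <;> simp [mul]

theorem left_distrib' (x y z : DR) : mul x (add y z) = add (mul x y) (mul x z) := by
  cases x with
  | bot => simp [bot_mul, bot_add]
  | nb b r =>
    cases y with
    | bot => simp [bot_add, mul_bot]
    | nb c s =>
      cases z with
      | bot => simp [add_bot, mul_bot]
      | nb d t =>
        simp only [mul, add]
        split_ifs <;>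
          simp only [mul, add, Bool.or_true, Bool.true_or] <;>
          (try split_ifs) <;>
          first
            | rfl
            | (exfalso; linarith)
            | (congr 1 <;> first | rfl | linarith)

theorem right_distrib' (x y z : DR) : mul (add x y) z = add (mul x z) (mul y z) := by
  rw [mul_comm' (add x y) z, left_distrib', mul_comm' z x, mul_comm' z y]

instance : Add DR := ⟨add⟩
instance : Zero DR := ⟨bot⟩
instance : Mul DR := ⟨mul⟩
instance : One DR := ⟨nb false 0⟩

instance : AddCommMonoid DR where
  add := add
  add_assoc := add_assoc'
  zero := bot
  zero_add := bot_add
  add_zero := add_bot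
  add_comm := add_comm'
  nsmul := nsmulRec

instance : CommMonoid DR where
  mul := mul
  mul_assoc := mul_assoc'
  one := nb false 0
  one_mul := one_mul'
  mul_one := fun x => by show mul x (nb false 0) = x; rw [mul_comm']; exact one_mul' x
  mul_comm := mul_comm'
  npow := npowRec

instance : CommSemiring DR where
  __ := (inferInstance : AddCommMonoid DR)
  __ := (inferInstance : CommMonoid DR)
  left_distrib := left_distrib'
  right_distrib := right_distrib'
  zero_mul := bot_mul
  mul_zero := mul_bot

/-- The ghost ideal `G₀ = ℝ^ν ∪ {-∞}` as a predicate. -/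
def IsGhost : DR → Prop
  | bot => True
  | nb b _ => b = true

/-- The tangible elements `T = ℝ` as a predicate. -/
def Tangible : DR → Prop
  | nb false _ => True
  | _ => False

/-- Membership in `T ∪ {-∞}`. -/
def TangibleOrBot (x : DR) : Prop := x = bot ∨ Tangible x

/-- The underlying value in `ℝ ∪ {-∞}`. -/
def val : DR → WithBot ℝ
  | bot => ⊥
  | nb _ r => (r : WithBot ℝ)

/-- `x ≤_ν y` : comparison of underlying values, `-∞` smallest. -/
def nuLe (x y : DR) : Prop := val x ≤ val y

/-- `x <_ν y` : strict comparison of underlying values, `-∞` smallest. -/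
def nuLt (x y : DR) : Prop := val x < val y

/-- The tangible lift `x̂` of `x` (with `hat bot = bot`). -/
def hat : DR → DR
  | bot => bot
  | nb _ r => nb false r

/-- The ghost map `ν`. -/
def nu : DR → DR
  | bot => bot
  | nb _ r => nb true r

/-- The ghost-surpass relation `x ⊨ y` on `D(ℝ)`. -/
def GhostSurp (x y : DR) : Prop := ∃ c : DR, IsGhost c ∧ x = y + c

end DR

open DR

/-- A vector in `D(ℝ)^(n)` lies in the ghost submodule `G₀^(n)`. -/
def GhostVec {n : ℕ} (v : Fin n → DR) : Prop := ∀ j, IsGhost (v j)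

/-- A tangible vector: all entries in `T ∪ {-∞}`. -/
def TangibleVec {n : ℕ} (v : Fin n → DR) : Prop := ∀ j, TangibleOrBot (v j)

/-- The ghost-surpass relation `v ⊨ w` on vectors. -/
def GhostSurpVec {n : ℕ} (v w : Fin n → DR) : Prop :=
  ∃ u : Fin n → DR, GhostVec u ∧ v = w + u

/-- A family of vectors is tropically dependent. -/
def TropDep {ι : Type*} [Fintype ι] {n : ℕ} (w : ι → Fin n → DR) : Prop :=
  ∃ I : Finset ι, I.Nonempty ∧ ∃ α : ι → DR, (∀ i ∈ I, Tangible (α i)) ∧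
    ∀ j : Fin n, IsGhost (∑ i ∈ I, α i * w i j)

/-- A family of vectors is tropically independent. -/
def TropIndep {ι : Type*} [Fintype ι] {n : ℕ} (w : ι → Fin n → DR) : Prop := ¬ TropDep w

/-- A set of vectors is tropically dependent. -/
def SetTropDep {n : ℕ} (S : Set (Fin n → DR)) : Prop :=
  ∃ I : Finset (Fin n → DR), ↑I ⊆ S ∧ I.Nonempty ∧
    ∃ α : (Fin n → DR) → DR, (∀ w ∈ I, Tangible (α w)) ∧
      ∀ j : Fin n, IsGhost (∑ w ∈ I, α w * w j)

/-- A set of vectors is tropically independent. -/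
def SetTropIndep {n : ℕ} (S : Set (Fin n → DR)) : Prop := ¬ SetTropDep S

/-- A d-base of `V`: a maximal tropically independent subset of `V`. -/
def IsDBase {n : ℕ} (V S : Set (Fin n → DR)) : Prop :=
  S ⊆ V ∧ SetTropIndep S ∧ ∀ S', S ⊆ S' → S' ⊆ V → SetTropIndep S' → S' = S

/-- The rank of `V`: the maximal number of elements of a d-base of `V`. -/
noncomputable def trank {n : ℕ} (V : Set (Fin n → DR)) : ℕ :=
  sSup {m | ∃ S, IsDBase V S ∧ S.Finite ∧ S.ncard = m}

/-- `v` is tropically spanned by `S`. -/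
def SpannedBy {n : ℕ} (S : Set (Fin n → DR)) (v : Fin n → DR) : Prop :=
  ∃ I : Finset (Fin n → DR), ↑I ⊆ S ∧ I.Nonempty ∧
    ∃ α : (Fin n → DR) → DR, (∀ w ∈ I, Tangible (α w)) ∧
      GhostSurpVec v (fun j => ∑ w ∈ I, α w * w j)

/-- The tropical determinant (permanent) of a square matrix over `D(ℝ)`. -/
noncomputable def tperm {k : ℕ} (A : Matrix (Fin k) (Fin k) DR) : DR :=
  ∑ π : Equiv.Perm (Fin k), ∏ i, A (π i) i

/-- Projective equivalence: `v = α • w` for a tangible scalar `α`. -/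
def ProjEquiv {n : ℕ} (v w : Fin n → DR) : Prop := ∃ α : DR, Tangible α ∧ v = α • w

/-- `v` is a critical vector of `V`: one cannot write `v ⊨ v₁ + v₂` with
`v₁, v₂ ∈ V` both outside the projective class of `v`. -/
def Critical {n : ℕ} (V : Set (Fin n → DR)) (v : Fin n → DR) : Prop :=
  ¬ ∃ v₁ ∈ V, ∃ v₂ ∈ V, ¬ ProjEquiv v₁ v ∧ ¬ ProjEquiv v₂ v ∧ GhostSurpVec v (v₁ + v₂)

/-- `S` tropically spans `V`. -/
def TropSpans {n : ℕ} (S V : Set (Fin n → DR)) : Prop := ∀ v ∈ V, SpannedBy S v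

/-- An s-base of `V`: a minimal tropically spanning subset of `V`. -/
def IsSBase {n : ℕ} (V S : Set (Fin n → DR)) : Prop :=
  S ⊆ V ∧ TropSpans S V ∧ ∀ S' ⊂ S, ¬ TropSpans S' V


namespace DR

lemma add_def (x y : DR) : x + y = add x y := rfl
lemma mul_def (x y : DR) : x * y = mul x y := rfl
lemma zero_def : (0 : DR) = bot := rfl
lemma one_def : (1 : DR) = nb false 0 := rfl

lemma ghost_bot : IsGhost bot := trivial

lemma ghost_add {x y : DR} (hx : IsGhost x) (hy : IsGhost y) : IsGhost (x + y) := by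
  cases x <;> cases y <;> simp_all [add_def, add, IsGhost] <;> split_ifs <;> simp [IsGhost]

lemma ghost_mul {x : DR} (hx : IsGhost x) (y : DR) : IsGhost (x * y) := by
  cases x <;> cases y <;> simp_all [mul_def, mul, IsGhost]

lemma tangible_mul {x y : DR} (hx : Tangible x) (hy : Tangible y) : Tangible (x * y) := by
  cases x with
  | bot => exact absurd hx (by simp [Tangible])
  | nb b r =>
    cases y with
    | bot => exact absurd hy (by simp [Tangible])
    | nb c s =>
      cases b <;> cases c <;> simp_all [mul_def, mul, Tangible]

lemma add_eq_bot {x y : DR} (h : x + y = bot) : x = bot ∧ y = bot := by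
  cases x <;> cases y <;> simp_all [add_def, add] <;> split_ifs at h <;> simp_all

lemma tangible_one : Tangible (1 : DR) := trivial

lemma exists_inv {x : DR} (hx : Tangible x) : ∃ y, Tangible y ∧ y * x = 1 := by
  cases x with
  | bot => exact absurd hx (by simp [Tangible])
  | nb b r =>
    cases b with
    | false => exact ⟨nb false (-r), trivial, by simp [mul_def, mul, one_def]⟩
    | true => exact absurd hx (by simp [Tangible])

lemma tangible_mul_eq_bot {x y : DR} (hx : Tangible x) (h : x * y = bot) : y = bot := by
  cases x <;> cases y <;> simp_all [mul_def, mul, Tangible]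

end DR
namespace DR

lemma nb_add_nb (b c : Bool) (r s : ℝ) :
    nb b r + nb c s = if r < s then nb c s else if s < r then nb b r else nb true r := rfl

lemma nb_add_bot (b : Bool) (r : ℝ) : nb b r + bot = nb b r := rfl

lemma nb_add_ne_bot (b : Bool) (r : ℝ) (y : DR) : nb b r + y ≠ bot := by
  cases y with
  | bot => simp [nb_add_bot]
  | nb c s => rw [nb_add_nb]; split_ifs <;> simp

/-- If the result of an addition is tangible, it equals one of the summands. -/
lemma tangible_add {x y : DR} (h : Tangible (x + y)) : x + y = x ∨ x + y = y := by
  cases x with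
  | bot => right; rw [add_def, bot_add]
  | nb b r =>
    cases y with
    | bot => left; rfl
    | nb c s =>
      rw [nb_add_nb] at h ⊢
      split_ifs at h ⊢ with h1 h2
      · right; rfl
      · left; rfl
      · exact absurd h (by simp [Tangible])

/-- value comparison from an addition equation -/
lemma le_of_eq_add {b b' : Bool} {q q' : ℝ} {y : DR} (h : nb b q = nb b' q' + y) : q' ≤ q := by
  cases y with
  | bot =>
    rw [nb_add_bot] at h
    injection h with _ hq; linarith
  | nb c t =>
    rw [nb_add_nb] at h
    split_ifs at h with h1 h2 <;> injection h with _ hq <;> linarith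

/-- ghost comparison from an addition equation at equal values -/
lemma ghost_le_of_eq_add {b b' : Bool} {q : ℝ} {y : DR} (h : nb b q = nb b' q + y) :
    b' = true → b = true := by
  intro hb'
  cases y with
  | bot => rw [nb_add_bot] at h; injection h with hb _; simp_all
  | nb c t =>
    rw [nb_add_nb] at h
    split_ifs at h with h1 h2 <;> injection h with hb hq <;> simp_all <;> linarith

/-- Dominated-term dropping. -/
lemma drop_small {b : Bool} {r q : ℝ} {y : DR} (hr : r < 0)
    (h : nb b q = nb b (r + q) + y) : nb b q = y := by
  cases y with
  | bot => rw [nb_add_bot] at h; injection h with _ hq; linarith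
  | nb c t =>
    rw [nb_add_nb] at h
    split_ifs at h with h1 h2
    · exact h
    · injection h with _ hq; linarith
    · injection h with _ hq; linarith

lemma no_big {b : Bool} {r q : ℝ} {y : DR} (hr : 0 < r)
    (h : nb b q = nb b (r + q) + y) : False := by
  have := le_of_eq_add h; linarith

/-- The sandwich lemma: if `x = a + c` and `a = x + t` then `a = x`. -/
lemma sandwich {x a c t : DR} (h1 : x = a + c) (h2 : a = x + t) : a = x := by
  cases x with
  | bot =>
    cases a with
    | bot => rfl
    | nb b' q' => exact absurd h1.symm (nb_add_ne_bot _ _ _)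
  | nb b q =>
    cases a with
    | bot => exact absurd h2.symm (nb_add_ne_bot _ _ _)
    | nb b' q' =>
      have hq : q = q' := le_antisymm (le_of_eq_add h2) (le_of_eq_add h1)
      subst hq
      have hb : b' = b := by
        cases b' <;> cases b
        · rfl
        · exact ghost_le_of_eq_add h2 rfl
        · exact (ghost_le_of_eq_add h1 rfl).symm
        · rfl
      rw [hb]

end DR
namespace DR

lemma add_ne_bot {x y : DR} (h : x ≠ bot ∨ y ≠ bot) : x + y ≠ bot := by
  intro hc
  rcases add_eq_bot hc with ⟨h1, h2⟩
  tauto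

lemma tangible_ne_bot {x : DR} (hx : Tangible x) : x ≠ bot := by
  cases x <;> simp_all [Tangible]

lemma hat_tangible {x : DR} (hx : x ≠ bot) : Tangible (hat x) := by
  cases x with
  | bot => exact absurd rfl hx
  | nb b r => trivial

/-- the ghost part of `c * x` relative to `hat c * x` -/
def gp : DR → DR → DR
  | bot, _ => bot
  | nb false _, _ => bot
  | nb true r, x => mul (nb true r) x

lemma gp_ghost (c x : DR) : IsGhost (gp c x) := by
  cases c with
  | bot => trivial
  | nb b r =>
    cases b with
    | false => trivial
    | true => exact ghost_mul (x := nb true r) rfl x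

lemma gp_spec (c x : DR) : c * x = hat c * x + gp c x := by
  cases c with
  | bot => simp [gp, hat, mul_def, mul, add_def, bot_add, bot_mul]
  | nb b r =>
    cases b with
    | false => simp [gp, hat, add_def, add_bot]
    | true =>
      show mul (nb true r) x = mul (nb false r) x + gp (nb true r) x
      cases x with
      | bot => simp [gp, mul, add_def, add]
      | nb c t => simp [gp, mul, nb_add_nb]

lemma ghost_sum {ι : Type*} (I : Finset ι) (f : ι → DR) (h : ∀ i ∈ I, IsGhost (f i)) :
    IsGhost (∑ i ∈ I, f i) :=
  Finset.sum_induction f IsGhost (fun _ _ => ghost_add) ghost_bot h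

lemma sum_eq_bot {ι : Type*} {I : Finset ι} {f : ι → DR} (h : ∑ i ∈ I, f i = bot) :
    ∀ i ∈ I, f i = bot := by
  classical
  induction I using Finset.induction_on with
  | empty => simp
  | insert _ _ hni ih =>
    rw [Finset.sum_insert hni] at h
    rcases add_eq_bot h with ⟨h1, h2⟩
    intro i hi
    rcases Finset.mem_insert.mp hi with rfl | hi'
    · exact h1
    · exact ih h2 i hi'

end DR

open DR in
/-- The merge lemma: a sum of two tangible combinations is a tangible combination
over the union, plus a ghost vector. -/
lemma merge {n : ℕ} [DecidableEq (Fin n → DR)] (A B : Finset (Fin n → DR))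
    (α β : (Fin n → DR) → DR)
    (hA : ∀ w ∈ A, α w ≠ bot) (hB : ∀ w ∈ B, β w ≠ bot) :
    ∃ γ : (Fin n → DR) → DR, ∃ u : Fin n → DR,
      (∀ w ∈ A ∪ B, Tangible (γ w)) ∧ GhostVec u ∧
      ∀ j, (∑ w ∈ A, α w * w j) + (∑ w ∈ B, β w * w j) = (∑ w ∈ A ∪ B, γ w * w j) + u j := by
  have key : ∀ (C : Finset (Fin n → DR)) (f : (Fin n → DR) → DR) (j : Fin n), C ⊆ A ∪ B →
      ∑ w ∈ C, f w * w j = ∑ w ∈ A ∪ B, (if w ∈ C then f w else 0) * w j := by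
    intro C f j hC
    calc ∑ w ∈ C, f w * w j
        = ∑ w ∈ (A ∪ B) ∩ C, f w * w j := by rw [Finset.inter_eq_right.mpr hC]
      _ = ∑ w ∈ A ∪ B, if w ∈ C then f w * w j else 0 := (Finset.sum_ite_mem _ _ _).symm
      _ = ∑ w ∈ A ∪ B, (if w ∈ C then f w else 0) * w j :=
          Finset.sum_congr rfl (fun w _ => by split_ifs <;> simp)
  set αt : (Fin n → DR) → DR := fun w => if w ∈ A then α w else 0 with hαt
  set βt : (Fin n → DR) → DR := fun w => if w ∈ B then β w else 0 with hβt
  have hcb : ∀ w ∈ A ∪ B, αt w + βt w ≠ bot := by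
    intro w hw
    rcases Finset.mem_union.mp hw with hw' | hw'
    · exact add_ne_bot (Or.inl (by rw [hαt]; simpa only [if_pos hw'] using hA w hw'))
    · exact add_ne_bot (Or.inr (by rw [hβt]; simpa only [if_pos hw'] using hB w hw'))
  refine ⟨fun w => hat (αt w + βt w), fun j => ∑ w ∈ A ∪ B, gp (αt w + βt w) (w j), ?_, ?_, ?_⟩
  · exact fun w hw => hat_tangible (hcb w hw)
  · exact fun j => ghost_sum _ _ (fun w _ => gp_ghost _ _)
  · intro j
    rw [key A α j Finset.subset_union_left, key B β j Finset.subset_union_right,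
      ← Finset.sum_add_distrib, ← Finset.sum_add_distrib]
    refine Finset.sum_congr rfl (fun w _ => ?_)
    rw [← right_distrib]
    exact gp_spec (αt w + βt w) (w j)
open DR

lemma smul_apply' {n : ℕ} (a : DR) (v : Fin n → DR) (j : Fin n) : (a • v) j = a * v j := rfl

lemma zero_apply' {n : ℕ} (j : Fin n) : (0 : Fin n → DR) j = bot := rfl

lemma proj_symm {n : ℕ} {x v : Fin n → DR} (h : ProjEquiv x v) : ProjEquiv v x := by
  obtain ⟨β, hβ, rfl⟩ := h
  obtain ⟨γ, hγ, hγβ⟩ := exists_inv hβ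
  exact ⟨γ, hγ, by rw [smul_smul, hγβ, one_smul]⟩

lemma proj_refl {n : ℕ} (v : Fin n → DR) : ProjEquiv v v :=
  ⟨1, tangible_one, (one_smul DR v).symm⟩

lemma proj_zero {n : ℕ} {v : Fin n → DR} (h : ProjEquiv 0 v) : v = 0 := by
  obtain ⟨β, hβ, hv⟩ := h
  funext j
  have := congrFun hv j
  rw [smul_apply', zero_apply'] at this
  exact (tangible_mul_eq_bot hβ this.symm)

lemma eq_zero_of_spanned_zero {n : ℕ} {S : Set (Fin n → DR)} (h : SpannedBy S 0) :
    (0 : Fin n → DR) ∈ S := by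
  obtain ⟨I, hIS, ⟨w₀, hw₀⟩, α, hα, u, hu, heq⟩ := h
  have hterm : ∀ w ∈ I, ∀ j, α w * w j = bot := by
    intro w hw j
    have hj := congrFun heq j
    rw [zero_apply'] at hj
    have := (add_eq_bot hj.symm).1
    exact sum_eq_bot this w hw
  have : w₀ = 0 := by
    funext j
    exact tangible_mul_eq_bot (hα w₀ hw₀) (hterm w₀ hw₀ j)
  exact this ▸ hIS hw₀

lemma zero_critical {n : ℕ} (V : Set (Fin n → DR)) : Critical V 0 := by
  rintro ⟨v₁, hv₁, v₂, hv₂, hnp1, _, u, hu, heq⟩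
  apply hnp1
  have hv₁0 : v₁ = 0 := by
    funext j
    have hj := (congrFun heq j).symm
    rw [zero_apply'] at hj
    exact (add_eq_bot (add_eq_bot hj).1).1
  rw [hv₁0]
  exact proj_refl 0

lemma spanned_of_pair {n : ℕ} [DecidableEq (Fin n → DR)] {S : Set (Fin n → DR)}
    {v : Fin n → DR} {A B : Finset (Fin n → DR)} {α β : (Fin n → DR) → DR}
    (hAS : ↑A ⊆ S) (hBS : ↑B ⊆ S) (hne : (A ∪ B).Nonempty)
    (hA : ∀ w ∈ A, α w ≠ bot) (hB : ∀ w ∈ B, β w ≠ bot)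
    {u₀ : Fin n → DR} (hu₀ : GhostVec u₀)
    (hv : ∀ j, v j = ((∑ w ∈ A, α w * w j) + (∑ w ∈ B, β w * w j)) + u₀ j) :
    SpannedBy S v := by
  obtain ⟨γ, u, hγ, hu, heq⟩ := merge A B α β hA hB
  refine ⟨A ∪ B, ?_, hne, γ, hγ, fun j => u j + u₀ j,
    fun j => ghost_add (hu j) (hu₀ j), ?_⟩
  · intro w hw
    rcases Finset.mem_union.mp (Finset.mem_coe.mp hw) with h' | h'
    · exact hAS h'
    · exact hBS h'
  · funext j
    show v j = (∑ w ∈ A ∪ B, γ w * w j) + (u j + u₀ j)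
    rw [hv j, heq j, add_assoc]

lemma spans_erase {n : ℕ} [DecidableEq (Fin n → DR)] {S : Set (Fin n → DR)}
    {V' : Set (Fin n → DR)} {s : Fin n → DR}
    (hS : TropSpans S V') (hs : SpannedBy (S \ {s}) s) : TropSpans (S \ {s}) V' := by
  intro v hv
  obtain ⟨I, hIS, hIne, α, hα, u, hu, heq⟩ := hS v hv
  by_cases hsI : s ∈ I
  · obtain ⟨J, hJS, hJne, γ, hγ, u', hu', heq'⟩ := hs
    refine spanned_of_pair (A := I.erase s) (B := J) (α := α) (β := fun w => α s * γ w)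
      ?_ hJS (hJne.mono Finset.subset_union_right) ?_ ?_
      (u₀ := fun j => α s * u' j + u j) ?_ ?_
    · intro w hw
      have hw' := Finset.mem_coe.mp hw
      exact ⟨hIS (Finset.mem_of_mem_erase hw'), Finset.ne_of_mem_erase hw'⟩
    · exact fun w hw => tangible_ne_bot (hα w (Finset.mem_of_mem_erase hw))
    · exact fun w hw => tangible_ne_bot (tangible_mul (hα s hsI) (hγ w hw))
    · intro j
      refine ghost_add ?_ (hu j)
      rw [mul_comm]
      exact ghost_mul (hu' j) _
    · intro j
      have h1 : v j = α s * s j + (∑ w ∈ I.erase s, α w * w j) + u j := by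
        have := congrFun heq j
        rw [show ((fun j => ∑ w ∈ I, α w * w j) + u) j = (∑ w ∈ I, α w * w j) + u j from rfl]
          at this
        rw [this, ← Finset.add_sum_erase _ _ hsI]
      have h2 : α s * s j = (∑ w ∈ J, (α s * γ w) * w j) + α s * u' j := by
        have := congrFun heq' j
        rw [show ((fun j => ∑ w ∈ J, γ w * w j) + u') j = (∑ w ∈ J, γ w * w j) + u' j from rfl]
          at this
        rw [this, mul_add, Finset.mul_sum]
        congr 1
        exact Finset.sum_congr rfl (fun w _ => (mul_assoc _ _ _).symm)
      rw [h1, h2]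
      ring
  · refine ⟨I, ?_, hIne, α, hα, u, hu, heq⟩
    intro w hw
    exact ⟨hIS hw, fun hws => hsI (hws ▸ Finset.mem_coe.mp hw)⟩
open DR

lemma critical_spanned {n : ℕ} {V : Submodule DR (Fin n → DR)} {S : Set (Fin n → DR)}
    (hSV : S ⊆ (V : Set (Fin n → DR))) {v : Fin n → DR} (hcrit : Critical (V : Set (Fin n → DR)) v)
    (hsp : SpannedBy S v) : ∃ s ∈ S, ProjEquiv v s := by
  classical
  by_cases hv0 : v = 0
  · subst hv0
    exact ⟨0, eq_zero_of_spanned_zero hsp, proj_refl 0⟩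
  have key : ∀ (m : ℕ) (I : Finset (Fin n → DR)), I.card ≤ m → ↑I ⊆ S → I.Nonempty →
      ∀ α : (Fin n → DR) → DR, (∀ w ∈ I, Tangible (α w)) →
      GhostSurpVec v (fun j => ∑ w ∈ I, α w * w j) → ∃ s ∈ S, ProjEquiv v s := by
    intro m
    induction m with
    | zero =>
      intro I hcard hIS hne α hα hsurp
      exact absurd (Finset.card_eq_zero.mp (Nat.le_zero.mp hcard)) hne.ne_empty
    | succ m ih =>
      intro I hcard hIS hne α hα hsurp
      obtain ⟨w₀, hw₀⟩ := hne
      have hw₀V : w₀ ∈ V := hSV (hIS hw₀)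
      have hv₁V : α w₀ • w₀ ∈ V := Submodule.smul_mem V _ hw₀V
      rcases Finset.eq_empty_or_nonempty (I.erase w₀) with herase | herase
      · -- singleton case
        have hIsing : I = {w₀} := by
          rcases (Finset.erase_eq_empty_iff I w₀).mp herase with h' | h'
          · exact absurd (h' ▸ hw₀) (Finset.notMem_empty w₀)
          · exact h'
        obtain ⟨u, hu, hequ⟩ := hsurp
        have hsurp' : GhostSurpVec v (α w₀ • w₀ + 0) := by
          rw [add_zero]
          exact ⟨u, hu, by
            rw [hequ]
            funext j
            show (fun j => ∑ w ∈ I, α w * w j) j + u j = α w₀ • w₀ j + u j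
            rw [hIsing]
            simp only [Finset.sum_singleton]
            rfl⟩
        have hor : ProjEquiv (α w₀ • w₀) v ∨ ProjEquiv (0 : Fin n → DR) v := by
          by_contra hc
          push_neg at hc
          exact hcrit ⟨α w₀ • w₀, hv₁V, 0, V.zero_mem, hc.1, hc.2, hsurp'⟩
        rcases hor with hp | hp
        · obtain ⟨γ, hγ, hveq⟩ := proj_symm hp
          exact ⟨w₀, hIS hw₀, ⟨γ * α w₀, tangible_mul hγ (hα w₀ hw₀), by
            rw [hveq, smul_smul]⟩⟩
        · exact absurd (proj_zero hp) hv0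
      · -- at least two elements
        set v₂ : Fin n → DR := fun j => ∑ w ∈ I.erase w₀, α w * w j with hv₂
        have hv₂V : v₂ ∈ V := by
          have : v₂ = ∑ w ∈ I.erase w₀, α w • w := by
            funext j
            rw [hv₂]
            show ∑ w ∈ I.erase w₀, α w * w j = (∑ w ∈ I.erase w₀, α w • w) j
            rw [Finset.sum_apply]
            exact Finset.sum_congr rfl (fun w _ => rfl)
          rw [this]
          exact Submodule.sum_mem V (fun w hw =>
            Submodule.smul_mem V _ (hSV (hIS (Finset.mem_of_mem_erase hw))))
        obtain ⟨u, hu, hequ⟩ := hsurp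
        have hsurp' : GhostSurpVec v (α w₀ • w₀ + v₂) := by
          refine ⟨u, hu, ?_⟩
          rw [hequ]
          funext j
          show (fun j => ∑ w ∈ I, α w * w j) j + u j = (α w₀ • w₀ j + v₂ j) + u j
          rw [hv₂]
          show (∑ w ∈ I, α w * w j) + u j
            = (α w₀ * w₀ j + ∑ w ∈ I.erase w₀, α w * w j) + u j
          rw [← Finset.add_sum_erase I (fun w => α w * w j) hw₀]
        have hor : ProjEquiv (α w₀ • w₀) v ∨ ProjEquiv v₂ v := by
          by_contra hc
          push_neg at hc
          exact hcrit ⟨α w₀ • w₀, hv₁V, v₂, hv₂V, hc.1, hc.2, hsurp'⟩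
        rcases hor with hp | hp
        · obtain ⟨γ, hγ, hveq⟩ := proj_symm hp
          exact ⟨w₀, hIS hw₀, ⟨γ * α w₀, tangible_mul hγ (hα w₀ hw₀), by
            rw [hveq, smul_smul]⟩⟩
        · obtain ⟨γ, hγ, hveq⟩ := proj_symm hp
          refine ih (I.erase w₀) ?_ ?_ herase (fun w => γ * α w)
            (fun w hw => tangible_mul hγ (hα w (Finset.mem_of_mem_erase hw))) ?_
          · have := Finset.card_erase_lt_of_mem hw₀
            omega
          · intro w hw
            exact hIS (Finset.mem_of_mem_erase (Finset.mem_coe.mp hw))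
          · refine ⟨0, fun j => ghost_bot, ?_⟩
            rw [hveq]
            funext j
            show (γ • v₂) j = (fun j => ∑ w ∈ I.erase w₀, (γ * α w) * w j) j + (0 : Fin n → DR) j
            rw [show ((fun j => ∑ w ∈ I.erase w₀, (γ * α w) * w j) j
              + (0 : Fin n → DR) j) = ∑ w ∈ I.erase w₀, (γ * α w) * w j from add_zero _]
            rw [smul_apply', hv₂, Finset.mul_sum]
            exact Finset.sum_congr rfl (fun w _ => (mul_assoc _ _ _).symm)
  obtain ⟨I, hIS, hIne, α, hα, hsurp⟩ := hsp
  exact key I.card I le_rfl hIS hIne α hα hsurp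
open DR

lemma sbase_critical {n : ℕ} {V : Submodule DR (Fin n → DR)} {S : Set (Fin n → DR)}
    (h : IsSBase (V : Set (Fin n → DR)) S) : ∀ s ∈ S, Critical (V : Set (Fin n → DR)) s := by
  classical
  intro s hsS
  by_cases hs0 : s = 0
  · subst hs0; exact zero_critical _
  rintro ⟨v₁, hv₁V, v₂, hv₂V, hnp1, hnp2, u, hu, hequ⟩
  obtain ⟨I₁, hI₁S, hI₁ne, α₁, hα₁, u₁, hu₁, he₁⟩ := h.2.1 v₁ hv₁V
  obtain ⟨I₂, hI₂S, hI₂ne, α₂, hα₂, u₂, hu₂, he₂⟩ := h.2.1 v₂ hv₂V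
  set β₁ : DR := if s ∈ I₁ then α₁ s else 0 with hβ₁
  set β₂ : DR := if s ∈ I₂ then α₂ s else 0 with hβ₂
  have expand : ∀ (I : Finset (Fin n → DR)) (α : (Fin n → DR) → DR) (u' v' : Fin n → DR),
      v' = (fun j => ∑ w ∈ I, α w * w j) + u' → ∀ j,
      v' j = (if s ∈ I then α s else 0) * s j + ((∑ w ∈ I.erase s, α w * w j) + u' j) := by
    intro I α u' v' he j
    have h0 : v' j = (∑ w ∈ I, α w * w j) + u' j := congrFun he j
    by_cases hsI : s ∈ I
    · rw [if_pos hsI, h0, ← Finset.add_sum_erase I (fun w => α w * w j) hsI, add_assoc]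
    · rw [if_neg hsI, h0, Finset.erase_eq_of_notMem hsI, zero_mul, zero_add]
  have hsj : ∀ j, s j = (β₁ + β₂) * s j +
      (((∑ w ∈ I₁.erase s, α₁ w * w j) + (∑ w ∈ I₂.erase s, α₂ w * w j)) +
        (u₁ j + (u₂ j + u j))) := by
    intro j
    have h0 : s j = v₁ j + v₂ j + u j := congrFun hequ j
    have h1 := expand I₁ α₁ u₁ v₁ he₁ j
    have h2 := expand I₂ α₂ u₂ v₂ he₂ j
    rw [← hβ₁] at h1
    rw [← hβ₂] at h2
    calc s j = v₁ j + v₂ j + u j := h0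
      _ = (β₁ * s j + ((∑ w ∈ I₁.erase s, α₁ w * w j) + u₁ j))
          + (β₂ * s j + ((∑ w ∈ I₂.erase s, α₂ w * w j) + u₂ j)) + u j := by rw [h1, h2]
      _ = _ := by ring
  have hUg : GhostVec (fun j => u₁ j + (u₂ j + u j)) :=
    fun j => ghost_add (hu₁ j) (ghost_add (hu₂ j) (hu j))
  have onecase : ∀ (I : Finset (Fin n → DR)) (α : (Fin n → DR) → DR) (u' v' c : Fin n → DR),
      v' = (fun j => ∑ w ∈ I, α w * w j) + u' → (∀ j, s j = v' j + c j) →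
      (if s ∈ I then α s else 0) = 1 → ProjEquiv v' s := by
    intro I α u' v' c he hsv h1
    have hvs : v' = s := by
      funext j
      have e2 : v' j = s j + ((∑ w ∈ I.erase s, α w * w j) + u' j) := by
        have e3 := expand I α u' v' he j
        rw [h1, one_mul] at e3
        exact e3
      exact sandwich (hsv j) e2
    exact ⟨1, tangible_one, by rw [one_smul, hvs]⟩
  have hs_c1 : ∀ j, s j = v₁ j + (v₂ j + u j) := by
    intro j
    rw [congrFun hequ j]
    show (v₁ j + v₂ j) + u j = _
    ring
  have hs_c2 : ∀ j, s j = v₂ j + (v₁ j + u j) := by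
    intro j
    rw [congrFun hequ j]
    show (v₁ j + v₂ j) + u j = _
    ring
  have hmain : ∃ U' : Fin n → DR, GhostVec U' ∧ ∀ j,
      s j = ((∑ w ∈ I₁.erase s, α₁ w * w j) + (∑ w ∈ I₂.erase s, α₂ w * w j)) + U' j := by
    cases hβc : β₁ + β₂ with
    | bot =>
      refine ⟨fun j => u₁ j + (u₂ j + u j), hUg, fun j => ?_⟩
      have hthis := hsj j
      rw [hβc, show (bot : DR) = 0 from rfl, zero_mul, zero_add] at hthis
      exact hthis
    | nb g r =>
      cases g with
      | true =>
        refine ⟨fun j => nb true r * s j + (u₁ j + (u₂ j + u j)),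
          fun j => ghost_add (ghost_mul (x := nb true r) rfl (s j)) (hUg j), fun j => ?_⟩
        have hthis := hsj j
        rw [hβc] at hthis
        rw [hthis]
        ring
      | false =>
        rcases lt_trichotomy r 0 with hr | hr | hr
        · refine ⟨fun j => u₁ j + (u₂ j + u j), hUg, fun j => ?_⟩
          have hthis := hsj j
          rw [hβc] at hthis
          cases hsv : s j with
          | bot =>
            rw [hsv] at hthis
            exact ((add_eq_bot hthis.symm).2).symm
          | nb b q =>
            rw [hsv] at hthis
            have hm : nb false r * nb b q = nb b (r + q) := by
              show mul (nb false r) (nb b q) = nb b (r + q)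
              simp [mul]
            rw [hm] at hthis
            exact drop_small hr hthis
        · exfalso
          subst hr
          have ht : Tangible (β₁ + β₂) := by rw [hβc]; trivial
          rcases tangible_add ht with hcase | hcase
          · have hb1 : β₁ = 1 := by rw [one_def, ← hβc, hcase]
            exact hnp1 (onecase I₁ α₁ u₁ v₁ (fun j => v₂ j + u j) he₁ hs_c1 hb1)
          · have hb2 : β₂ = 1 := by rw [one_def, ← hβc, hcase]
            exact hnp2 (onecase I₂ α₂ u₂ v₂ (fun j => v₁ j + u j) he₂ hs_c2 hb2)
        · exfalso
          obtain ⟨j₀, hj₀⟩ := Function.ne_iff.mp hs0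
          have hthis := hsj j₀
          rw [hβc] at hthis
          cases hsv : s j₀ with
          | bot => exact hj₀ hsv
          | nb b q =>
            rw [hsv] at hthis
            have hm : nb false r * nb b q = nb b (r + q) := by
              show mul (nb false r) (nb b q) = nb b (r + q)
              simp [mul]
            rw [hm] at hthis
            exact no_big hr hthis
  obtain ⟨U', hU', hsR⟩ := hmain
  have hzero : (0 : Fin n → DR) ∈ S := eq_zero_of_spanned_zero (h.2.1 0 V.zero_mem)
  have hspan : SpannedBy (S \ {s}) s := by
    rcases Finset.eq_empty_or_nonempty (I₁.erase s ∪ I₂.erase s) with hJ | hJ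
    · obtain ⟨hJ1, hJ2⟩ := Finset.union_eq_empty.mp hJ
      have hsg : ∀ j, s j = U' j := by
        intro j
        have hthis := hsR j
        rw [hJ1, hJ2] at hthis
        simpa using hthis
      refine ⟨{0}, ?_, Finset.singleton_nonempty _, fun _ => 1, fun w _ => tangible_one,
        s, fun j => by rw [hsg j]; exact hU' j, ?_⟩
      · intro w hw
        rw [Finset.coe_singleton, Set.mem_singleton_iff] at hw
        subst hw
        exact ⟨hzero, fun he => hs0 (Set.mem_singleton_iff.mp he).symm⟩
      · funext j
        show s j = (∑ w ∈ ({0} : Finset (Fin n → DR)), (1 : DR) * w j) + s j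
        rw [Finset.sum_singleton, show ((1 : DR) * (0 : Fin n → DR) j) = 0 from rfl, zero_add]
    · refine spanned_of_pair (A := I₁.erase s) (B := I₂.erase s) (α := α₁) (β := α₂)
        ?_ ?_ hJ ?_ ?_ hU' hsR
      · intro w hw
        have hw' := Finset.mem_coe.mp hw
        exact ⟨hI₁S (Finset.mem_of_mem_erase hw'), Finset.ne_of_mem_erase hw'⟩
      · intro w hw
        have hw' := Finset.mem_coe.mp hw
        exact ⟨hI₂S (Finset.mem_of_mem_erase hw'), Finset.ne_of_mem_erase hw'⟩
      · exact fun w hw => tangible_ne_bot (hα₁ w (Finset.mem_of_mem_erase hw))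
      · exact fun w hw => tangible_ne_bot (hα₂ w (Finset.mem_of_mem_erase hw))
  exact h.2.2 (S \ {s}) (Set.sdiff_singleton_ssubset.mpr hsS) (spans_erase h.2.1 hspan)

/-- An s-base of `V` is precisely the set of critical elements of `V`, up to
projective equivalence. -/
theorem sbase_is_critical_set (n : ℕ) (V : Submodule DR (Fin n → DR))
    (S : Set (Fin n → DR)) (h : IsSBase (V : Set (Fin n → DR)) S) :
    (∀ s ∈ S, Critical (V : Set (Fin n → DR)) s) ∧
    (∀ v ∈ V, Critical (V : Set (Fin n → DR)) v → ∃ s ∈ S, ProjEquiv v s) := by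
  refine ⟨sbase_critical h, fun v hv hcrit => critical_spanned h.1 hcrit (h.2.1 v hv)⟩
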